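/- arXiv:1512.07661 — 2 statements merged into one kernel-verified Lean document; each statement's English description precedes it below -/
import Mathlib

section
/- Let n be a positive integer and let g₋₁, g₀, g₁ be complex subspaces of the n×n complex matrices such that, writing ⁅P,Q⁆ = PQ − QP, one has ⁅g_i, g_j⁆ ⊆ g_{i+j} for all i, j ∈ {−1,0,1} with i+j ∈ {−1,0,1}, and ⁅g_i, g_j⁆ = 0 whenever |i+j| > 1 (in particular g₁ and g₋₁ are abelian). Let Z' : ℝ → g₋₁, Y : ℝ → g₀, Z : ℝ → g₁ be continuous, and suppose W : ℝ → g₋₁, V : ℝ → g₁ and y : ℝ → Matrix n n ℂ satisfy: (i) y(t) is invertible and y(t)⁻¹·Z(t)·y(t) ∈ g₁ for all t; (ii) W has derivative Z'(t) − ⁅W(t), Y(t)⁆ + (1/2)⁅W(t), ⁅W(t), Z(t)⁆⁆ at every t; (iii) y has derivative (Y(t) − ⁅W(t), Z(t)⁆)·y(t) at every t; (iv) V has derivative y(t)⁻¹·Z(t)·y(t) at every t; (v) W(0) = 0, y(0) = 1, V(0) = 0. Then the function x(t) = exp(W(t))·y(t)·exp(V(t)) satisfies x(0) = 1 and x has derivative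 (Z'(t) + Y(t) + Z(t))·x(t) at every t. -/
open NormedSpace

attribute [local instance]
  Matrix.linftyOpNormedAddCommGroup Matrix.linftyOpNormedSpace
  Matrix.linftyOpNormedRing Matrix.linftyOpNormedAlgebra


variable {𝔸 : Type*} [NormedRing 𝔸] [NormedAlgebra ℂ 𝔸] [CompleteSpace 𝔸]

theorem myHasDerivAt_exp_comp (f : ℝ → 𝔸) (f' : 𝔸) (t : ℝ) (hf : HasDerivAt f f' t)
    (hcomm : ∀ s, Commute (f s) (f t)) :
    HasDerivAt (fun s => exp (f s)) (f' * exp (f t)) t := by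
  have h0 : HasFDerivAt exp (1 : 𝔸 →L[ℂ] 𝔸) (f t - f t) := by
    rw [sub_self]; exact hasFDerivAt_exp_zero
  have hg : HasDerivAt (fun s => f s - f t) f' t := hf.sub_const _
  have h1 : HasDerivAt (fun s => exp (f s - f t)) f' t := by
    have := (h0.restrictScalars ℝ).comp_hasDerivAt t hg
    exact this
  have h2 : HasDerivAt (fun s => exp (f s - f t) * exp (f t)) (f' * exp (f t)) t :=
    h1.mul_const _
  refine h2.congr_of_eventuallyEq (Filter.Eventually.of_forall fun s => ?_)
  show exp (f s) = exp (f s - f t) * exp (f t)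
  let +nondep : NormedAlgebra ℚ 𝔸 := .restrictScalars ℚ ℂ 𝔸
  rw [← exp_add_of_commute ((hcomm s).sub_left (Commute.refl (f t))), sub_add_cancel]


variable {𝔸 : Type*} [Ring 𝔸] [Algebra ℂ 𝔸]

theorem myPow_mul (W A B C : 𝔸) (hB : W * A = A * W + B) (hC : W * B = B * W + C)
    (hW : W * C = C * W) : ∀ k : ℕ,
    W ^ (k + 2) * A = A * W ^ (k + 2) + ((k : ℂ) + 2) • (B * W ^ (k + 1))
      + ((((k : ℂ) + 2) * ((k : ℂ) + 1)) / 2) • (C * W ^ k) := by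
  intro k
  induction k with
  | zero =>
    have h2 : W ^ 2 * A = A * W ^ 2 + B * W + (B * W + C) := by
      rw [pow_two, mul_assoc, hB, mul_add, ← mul_assoc, hB, ← mul_assoc, hC]
      noncomm_ring
    simp only [Nat.zero_add, Nat.cast_zero, zero_add, pow_one, pow_zero, mul_one, h2]
    match_scalars <;> ring
  | succ k ih =>
    have hkk' : k + 2 + 1 = k + 1 + 2 := by omega
    have hkk2 : k + 1 + 1 = k + 2 := by omega
    have e1 : W ^ (k + 1 + 2) * A = W * (W ^ (k + 2) * A) := by
      rw [← mul_assoc, ← _root_.pow_succ', hkk']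
    rw [e1, ih, mul_add, mul_add, mul_smul_comm, mul_smul_comm,
      ← mul_assoc W A, hB, ← mul_assoc W B, hC, ← mul_assoc W C, hW]
    have e2 : (A * W + B) * W ^ (k + 2) = A * W ^ (k + 1 + 2) + B * W ^ (k + 2) := by
      rw [add_mul, mul_assoc, ← _root_.pow_succ', hkk']
    have e3 : (B * W + C) * W ^ (k + 1) = B * W ^ (k + 2) + C * W ^ (k + 1) := by
      rw [add_mul, mul_assoc, ← _root_.pow_succ', hkk2]
    have e4 : C * W * W ^ k = C * W ^ (k + 1) := by
      rw [mul_assoc, ← _root_.pow_succ']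
    rw [e2, e3, e4]
    push_cast
    match_scalars <;> ring

theorem myExp_mul {𝔹 : Type*} [NormedRing 𝔹] [NormedAlgebra ℂ 𝔹] [CompleteSpace 𝔹]
    (W A B C : 𝔹) (hB : W * A = A * W + B) (hC : W * B = B * W + C)
    (hW : W * C = C * W) :
    exp W * A = (A + B + (1 / 2 : ℂ) • C) * exp W := by
  set S := exp W with hSdef
  have hS : HasSum (fun k : ℕ => (k.factorial : ℂ)⁻¹ • W ^ k) S := exp_series_hasSum_exp' W
  have h1 : HasSum (fun k : ℕ => (k.factorial : ℂ)⁻¹ • (A * W ^ k)) (A * S) := by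
    simpa [mul_smul_comm] using hS.mul_left A
  have hBsum : HasSum (fun k : ℕ => (k.factorial : ℂ)⁻¹ • (B * W ^ k)) (B * S) := by
    simpa [mul_smul_comm] using hS.mul_left B
  have hCsum : HasSum (fun k : ℕ => (k.factorial : ℂ)⁻¹ • ((1 / 2 : ℂ) • (C * W ^ k)))
      ((1 / 2 : ℂ) • (C * S)) := by
    have := ((hS.mul_left C).const_smul ((1 / 2 : ℂ)))
    simpa [mul_smul_comm, smul_smul, mul_comm] using this
  set h2 : ℕ → 𝔹 := fun k => (k.factorial : ℂ)⁻¹ • ((k : ℂ) • (B * W ^ (k - 1))) with h2def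
  have key2 : ∀ n : ℕ, h2 (n + 1) = (n.factorial : ℂ)⁻¹ • (B * W ^ n) := by
    intro n
    simp only [h2def, Nat.add_sub_cancel, smul_smul]
    congr 1
    rw [Nat.factorial_succ]
    push_cast
    have h0 : ((n.factorial : ℂ)) ≠ 0 := Nat.cast_ne_zero.mpr n.factorial_ne_zero
    have h1 : ((n : ℂ) + 1) ≠ 0 := Nat.cast_add_one_ne_zero n
    field_simp
  have h2sum : HasSum h2 (B * S) := by
    have hshift : HasSum (fun n => h2 (n + 1)) (B * S) := by
      simpa [key2] using hBsum
    have := (hasSum_nat_add_iff (f := h2) 1).mp hshift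
    simpa [h2def] using this
  set h3 : ℕ → 𝔹 := fun k =>
      (k.factorial : ℂ)⁻¹ • (((k : ℂ) * ((k : ℂ) - 1) / 2) • (C * W ^ (k - 2))) with h3def
  have key3 : ∀ n : ℕ, h3 (n + 2) = (n.factorial : ℂ)⁻¹ • ((1 / 2 : ℂ) • (C * W ^ n)) := by
    intro n
    simp only [h3def, Nat.add_sub_cancel, smul_smul]
    congr 1
    have h0 : ((n.factorial : ℂ)) ≠ 0 := Nat.cast_ne_zero.mpr n.factorial_ne_zero
    have hn1 : ((n : ℂ) + 1) ≠ 0 := Nat.cast_add_one_ne_zero n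
    have hn2 : ((n : ℂ) + 2) ≠ 0 := by
      have h := Nat.cast_ne_zero (R := ℂ) (n := n + 2) |>.mpr (by omega)
      push_cast at h
      exact h
    have hfac : (((n + 2).factorial : ℂ)) = ((n : ℂ) + 2) * (((n : ℂ) + 1) * (n.factorial : ℂ)) := by
      rw [Nat.factorial_succ, Nat.factorial_succ]
      push_cast
      ring
    rw [hfac]
    push_cast
    field_simp
    ring
  have h3sum : HasSum h3 ((1 / 2 : ℂ) • (C * S)) := by
    have hshift : HasSum (fun n => h3 (n + 2)) ((1 / 2 : ℂ) • (C * S)) := by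
      simpa [key3] using hCsum
    have := (hasSum_nat_add_iff (f := h3) 2).mp hshift
    simpa [h3def, Finset.sum_range_succ, sub_self] using this
  have htot : HasSum (fun k : ℕ => (k.factorial : ℂ)⁻¹ • (W ^ k * A))
      (A * S + (B * S + (1 / 2 : ℂ) • (C * S))) := by
    have hadd := h1.add (h2sum.add h3sum)
    refine HasSum.congr_fun hadd ?_
    intro k
    match k with
    | 0 => simp [h2def, h3def]
    | 1 =>
      simp only [h2def, h3def]
      norm_num [hB]
    | (k + 2) =>
      rw [myPow_mul W A B C hB hC hW k]
      simp only [h2def, h3def, Nat.add_sub_cancel, smul_add]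
      push_cast
      match_scalars <;> ring
  have hfin : HasSum (fun k : ℕ => (k.factorial : ℂ)⁻¹ • (W ^ k * A)) (S * A) := by
    simpa [smul_mul_assoc] using hS.mul_right A
  have hmain : S * A = A * S + (B * S + (1 / 2 : ℂ) • (C * S)) := hfin.unique htot
  rw [hmain, add_mul, add_mul, smul_mul_assoc, add_assoc]

/-- (Wei–Norman factorization for a cominuscule grading of a matrix
Lie algebra.)  Let `g₋₁, g₀, g₁` be complex subspaces of the `n×n` complex matrices with
`⁅gᵢ, gⱼ⁆ ⊆ g_{i+j}` for `i, j, i+j ∈ {-1,0,1}` and `⁅gᵢ, gⱼ⁆ = 0` when `|i+j| > 1`.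
Let `Z' : ℝ → g₋₁`, `Y : ℝ → g₀`, `Z : ℝ → g₁` be continuous, and suppose `W : ℝ → g₋₁`
solves the Riccati equation `W' = Z' − ⁅W,Y⁆ + ½⁅W,⁅W,Z⁆⁆`, `y` solves the development
equation `y' = (Y − ⁅W,Z⁆)·y` with `y(t)` invertible and `y⁻¹·Z·y ∈ g₁`, and
`V : ℝ → g₁` solves `V' = y⁻¹·Z·y`, with `W(0) = 0`, `y(0) = 1`, `V(0) = 0`.  Then
`x = exp(W)·y·exp(V)` satisfies `x(0) = 1` and `dx/dt = (Z' + Y + Z)·x`. -/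
theorem wei_norman_cominuscule_matrix_factorization
    {n : ℕ} (hn : 0 < n)
    (g : ℤ → Submodule ℂ (Matrix (Fin n) (Fin n) ℂ))
    (hgrading : ∀ i ∈ ({-1, 0, 1} : Set ℤ), ∀ j ∈ ({-1, 0, 1} : Set ℤ),
      i + j ∈ ({-1, 0, 1} : Set ℤ) →
      ∀ x ∈ g i, ∀ y ∈ g j, ⁅x, y⁆ ∈ g (i + j))
    (habelian : ∀ i ∈ ({-1, 0, 1} : Set ℤ), ∀ j ∈ ({-1, 0, 1} : Set ℤ),
      1 < |i + j| → ∀ x ∈ g i, ∀ y ∈ g j, ⁅x, y⁆ = 0)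
    (Z' Y Z : ℝ → Matrix (Fin n) (Fin n) ℂ)
    (hZ'mem : ∀ t : ℝ, Z' t ∈ g (-1)) (hYmem : ∀ t : ℝ, Y t ∈ g 0)
    (hZmem : ∀ t : ℝ, Z t ∈ g 1)
    (hZ'cont : Continuous Z') (hYcont : Continuous Y) (hZcont : Continuous Z)
    (W V y : ℝ → Matrix (Fin n) (Fin n) ℂ)
    (hWmem : ∀ t : ℝ, W t ∈ g (-1)) (hVmem : ∀ t : ℝ, V t ∈ g 1)
    (hyunit : ∀ t : ℝ, IsUnit (y t))
    (hconj : ∀ t : ℝ, (y t)⁻¹ * Z t * y t ∈ g 1)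
    (hW : ∀ t : ℝ, HasDerivAt W
      (Z' t - ⁅W t, Y t⁆ + (1 / 2 : ℂ) • ⁅W t, ⁅W t, Z t⁆⁆) t)
    (hy : ∀ t : ℝ, HasDerivAt y ((Y t - ⁅W t, Z t⁆) * y t) t)
    (hV : ∀ t : ℝ, HasDerivAt V ((y t)⁻¹ * Z t * y t) t)
    (hW0 : W 0 = 0) (hy0 : y 0 = 1) (hV0 : V 0 = 0)
    (x : ℝ → Matrix (Fin n) (Fin n) ℂ)
    (hx : ∀ t : ℝ, x t = exp (W t) * y t * exp (V t)) :
    x 0 = 1 ∧ ∀ t : ℝ, HasDerivAt x ((Z' t + Y t + Z t) * x t) t := by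
  have hmneg : (-1 : ℤ) ∈ ({-1, 0, 1} : Set ℤ) := by norm_num
  have hmzero : (0 : ℤ) ∈ ({-1, 0, 1} : Set ℤ) := by norm_num
  have hmone : (1 : ℤ) ∈ ({-1, 0, 1} : Set ℤ) := by norm_num
  have hab : ∀ P ∈ g (-1), ∀ Q ∈ g (-1), ⁅P, Q⁆ = 0 :=
    habelian (-1) hmneg (-1) hmneg (by norm_num)
  have hab1 : ∀ P ∈ g 1, ∀ Q ∈ g 1, ⁅P, Q⁆ = 0 :=
    habelian 1 hmone 1 hmone (by norm_num)
  have hWY : ∀ t, ⁅W t, Y t⁆ ∈ g (-1) := fun t => by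
    simpa using hgrading (-1) hmneg 0 hmzero (show (-1:ℤ)+0 ∈ ({-1,0,1}:Set ℤ) by norm_num) (W t) (hWmem t) (Y t) (hYmem t)
  have hWZ : ∀ t, ⁅W t, Z t⁆ ∈ g 0 := fun t => by
    simpa using hgrading (-1) hmneg 1 hmone (show (-1:ℤ)+1 ∈ ({-1,0,1}:Set ℤ) by norm_num) (W t) (hWmem t) (Z t) (hZmem t)
  have hWWZ : ∀ t, ⁅W t, ⁅W t, Z t⁆⁆ ∈ g (-1) := fun t => by
    simpa using hgrading (-1) hmneg 0 hmzero (show (-1:ℤ)+0 ∈ ({-1,0,1}:Set ℤ) by norm_num) (W t) (hWmem t) _ (hWZ t)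
  have hWcomm : ∀ s u : ℝ, Commute (W s) (W u) := fun s u => by
    have := hab (W s) (hWmem s) (W u) (hWmem u)
    rwa [Ring.lie_def, sub_eq_zero] at this
  have hVcomm : ∀ s u : ℝ, Commute (V s) (V u) := fun s u => by
    have := hab1 (V s) (hVmem s) (V u) (hVmem u)
    rwa [Ring.lie_def, sub_eq_zero] at this
  constructor
  · rw [hx 0, hW0, hy0, hV0, exp_zero]
    simp
  · intro t
    set E := exp (W t) with hE
    set F := exp (V t) with hF
    set D := Z' t - ⁅W t, Y t⁆ + (1 / 2 : ℂ) • ⁅W t, ⁅W t, Z t⁆⁆ with hD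
    set A := Y t + Z t - ⁅W t, Z t⁆ with hA
    set B := ⁅W t, Y t⁆ + ⁅W t, Z t⁆ - ⁅W t, ⁅W t, Z t⁆⁆ with hB
    set C := ⁅W t, ⁅W t, Z t⁆⁆ with hC
    have hv1 : ⁅W t, ⁅W t, Y t⁆⁆ = 0 := hab (W t) (hWmem t) _ (hWY t)
    have hv2 : ⁅W t, ⁅W t, ⁅W t, Z t⁆⁆⁆ = 0 := hab (W t) (hWmem t) _ (hWWZ t)
    have hBlie : ⁅W t, A⁆ = B := by rw [hA, hB, hC]; simp only [Ring.lie_def]; noncomm_ring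
    have hClie : ⁅W t, B⁆ = C := by
      have hexp : ⁅W t, ⁅W t, Y t⁆ + ⁅W t, Z t⁆ - C⁆ = ⁅W t, ⁅W t, Y t⁆⁆ + ⁅W t, ⁅W t, Z t⁆⁆ - ⁅W t, C⁆ := by
        simp only [Ring.lie_def]; noncomm_ring
      rw [hB, hexp, hv1, hC, hv2]
      abel
    have hBmul : W t * A = A * W t + B := by
      rw [← hBlie, Ring.lie_def]; abel
    have hCmul : W t * B = B * W t + C := by
      rw [← hClie, Ring.lie_def]; abel
    have hWCmul : W t * C = C * W t := by
      have h := hv2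
      rw [← hC] at h
      rw [Ring.lie_def, sub_eq_zero] at h
      exact h
    have key : E * A = (A + B + (1 / 2 : ℂ) • C) * E :=
      myExp_mul (W t) A B C hBmul hCmul hWCmul
    have hsum : D + (A + B + (1 / 2 : ℂ) • C) = Z' t + Y t + Z t := by
      rw [hD, hA, hB, hC]
      module
    have main : D * E + E * A = (Z' t + Y t + Z t) * E := by
      rw [key, ← add_mul, hsum]
    have hdet : IsUnit (y t).det := (Matrix.isUnit_iff_isUnit_det _).mp (hyunit t)
    have hyy : y t * ((y t)⁻¹ * Z t * y t) = Z t * y t := by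
      rw [← Matrix.mul_assoc, ← Matrix.mul_assoc, Matrix.mul_nonsing_inv _ hdet, Matrix.one_mul]
    have hEd : HasDerivAt (fun s => exp (W s)) (D * E) t :=
      myHasDerivAt_exp_comp W D t (hW t) (fun s => hWcomm s t)
    have hFd : HasDerivAt (fun s => exp (V s)) (((y t)⁻¹ * Z t * y t) * F) t :=
      myHasDerivAt_exp_comp V _ t (hV t) (fun s => hVcomm s t)
    have hprod := (hEd.mul (hy t)).mul hFd
    have hxd := hprod.congr_of_eventuallyEq (Filter.Eventually.of_forall fun s => (hx s))
    rw [hx t]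
    refine hxd.congr_deriv (Eq.symm ?_)
    have hstep : E * y t * ((y t)⁻¹ * Z t * y t * F) = E * (Z t * y t) * F := by
      rw [Matrix.mul_assoc E (y t), ← Matrix.mul_assoc (y t), hyy]
      noncomm_ring
    have lhs_eq : (Z' t + Y t + Z t) * (E * y t * F) = (D * E + E * A) * (y t * F) := by
      rw [main]
      noncomm_ring
    simp only [Pi.mul_apply]
    rw [← hE, ← hF, lhs_eq, hstep, hA]
    noncomm_ring
end

section
/- Let p, q be positive integers. Let A : ℝ → Matrix p p ℂ, B : ℝ → Matrix p q ℂ, C : ℝ → Matrix q p ℂ, D : ℝ → Matrix q q ℂ be continuous, and set X(t) to be the block matrix with blocks A(t), B(t); C(t), D(t). Suppose w : ℝ → Matrix q p ℂ, a : ℝ → Matrix p p ℂ, d : ℝ → Matrix q q ℂ, v : ℝ → Matrix p q ℂ satisfy: (i) a(t) and d(t) are invertible for all t; (ii) w has derivative C(t) − w(t)·A(t) + D(t)·w(t) − w(t)·B(t)·w(t) at every t (a matrix Riccati equation); (iii) a has derivative (A(t) + B(t)·w(t))·a(t) at every t; (iv) d has derivative (D(t) − w(t)·B(t))·d(t) at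 every t; (v) v has derivative a(t)⁻¹·B(t)·d(t) at every t; (vi) w(0) = 0, a(0) = 1, d(0) = 1, v(0) = 0. Then the block matrix product x(t) = [[1, 0],[w(t), 1]] · [[a(t), 0],[0, d(t)]] · [[1, v(t)],[0, 1]] satisfies x(0) = 1 and x has derivative X(t)·x(t) at every t. -/
open NormedSpace

attribute [local instance]
  Matrix.linftyOpNormedAddCommGroup Matrix.linftyOpNormedSpace
  Matrix.linftyOpNormedRing Matrix.linftyOpNormedAlgebra

section aux
open Matrix
variable {p q : ℕ}

private noncomputable def blkCLM
    (f : Matrix (Fin p) (Fin p) ℂ × Matrix (Fin p) (Fin q) ℂ ×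
      Matrix (Fin q) (Fin p) ℂ × Matrix (Fin q) (Fin q) ℂ)
    : Matrix (Fin p ⊕ Fin q) (Fin p ⊕ Fin q) ℂ :=
  Matrix.fromBlocks f.1 f.2.1 f.2.2.1 f.2.2.2

private noncomputable def blkL :
    (Matrix (Fin p) (Fin p) ℂ × Matrix (Fin p) (Fin q) ℂ ×
      Matrix (Fin q) (Fin p) ℂ × Matrix (Fin q) (Fin q) ℂ)
      →L[ℝ] Matrix (Fin p ⊕ Fin q) (Fin p ⊕ Fin q) ℂ :=
  LinearMap.toContinuousLinearMap
  { toFun := blkCLM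
    map_add' := by
      rintro ⟨a, b, c, d⟩ ⟨a', b', c', d'⟩
      simp [blkCLM, Matrix.fromBlocks_add]
    map_smul' := by
      rintro r ⟨a, b, c, d⟩
      simp [blkCLM, Matrix.fromBlocks_smul] }

lemma hasDerivAt_fromBlocks
    {f : ℝ → Matrix (Fin p) (Fin p) ℂ} {g : ℝ → Matrix (Fin p) (Fin q) ℂ}
    {h : ℝ → Matrix (Fin q) (Fin p) ℂ} {k : ℝ → Matrix (Fin q) (Fin q) ℂ}
    {f' g' h' k'} {t : ℝ}
    (hf : HasDerivAt f f' t) (hg : HasDerivAt g g' t)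
    (hh : HasDerivAt h h' t) (hk : HasDerivAt k k' t) :
    HasDerivAt (fun s => Matrix.fromBlocks (f s) (g s) (h s) (k s))
      (Matrix.fromBlocks f' g' h' k') t := by
  have hprod : HasDerivAt (fun s => (f s, g s, h s, k s)) (f', g', h', k') t :=
    hf.prodMk (hg.prodMk (hh.prodMk hk))
  exact (blkL.hasFDerivAt.comp_hasDerivAt t hprod :)

lemma fromBlocks_inj' {A A' : Matrix (Fin p) (Fin p) ℂ} {B B' : Matrix (Fin p) (Fin q) ℂ}
    {C C' : Matrix (Fin q) (Fin p) ℂ} {D D' : Matrix (Fin q) (Fin q) ℂ}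
    (h1 : A = A') (h2 : B = B') (h3 : C = C') (h4 : D = D') :
    Matrix.fromBlocks A B C D = Matrix.fromBlocks A' B' C' D' := by
  rw [h1, h2, h3, h4]
end aux

/-- (Wei–Norman reduction for `GL(p+q, ℂ)` with the block
upper-triangular cominuscule parabolic.)  Let `X(t)` be the block matrix
`[[A(t),B(t)],[C(t),D(t)]]` with continuous blocks.  Suppose `w` solves the matrix
Riccati equation `w' = C − wA + Dw − wBw`, `a` and `d` solve the block-diagonal
developments `a' = (A + Bw)a` and `d' = (D − wB)d` with `a(t)`, `d(t)` invertible,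
`v` solves `v' = a⁻¹ B d`, with `w(0)=0`, `a(0)=1`, `d(0)=1`, `v(0)=0`.  Then
`x = [[1,0],[w,1]]·[[a,0],[0,d]]·[[1,v],[0,1]]` satisfies `x(0)=1` and `x' = X·x`. -/
theorem wei_norman_block_matrix_factorization
    {p q : ℕ} (hp : 0 < p) (hq : 0 < q)
    (A : ℝ → Matrix (Fin p) (Fin p) ℂ) (B : ℝ → Matrix (Fin p) (Fin q) ℂ)
    (C : ℝ → Matrix (Fin q) (Fin p) ℂ) (D : ℝ → Matrix (Fin q) (Fin q) ℂ)
    (hA : Continuous A) (hB : Continuous B) (hC : Continuous C) (hD : Continuous D)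
    (X : ℝ → Matrix (Fin p ⊕ Fin q) (Fin p ⊕ Fin q) ℂ)
    (hX : ∀ t : ℝ, X t = Matrix.fromBlocks (A t) (B t) (C t) (D t))
    (w : ℝ → Matrix (Fin q) (Fin p) ℂ) (a : ℝ → Matrix (Fin p) (Fin p) ℂ)
    (d : ℝ → Matrix (Fin q) (Fin q) ℂ) (v : ℝ → Matrix (Fin p) (Fin q) ℂ)
    (haunit : ∀ t : ℝ, IsUnit (a t)) (hdunit : ∀ t : ℝ, IsUnit (d t))
    (hw : ∀ t : ℝ, HasDerivAt w
      (C t - w t * A t + D t * w t - w t * B t * w t) t)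
    (ha : ∀ t : ℝ, HasDerivAt a ((A t + B t * w t) * a t) t)
    (hd : ∀ t : ℝ, HasDerivAt d ((D t - w t * B t) * d t) t)
    (hv : ∀ t : ℝ, HasDerivAt v ((a t)⁻¹ * B t * d t) t)
    (hw0 : w 0 = 0) (ha0 : a 0 = 1) (hd0 : d 0 = 1) (hv0 : v 0 = 0)
    (x : ℝ → Matrix (Fin p ⊕ Fin q) (Fin p ⊕ Fin q) ℂ)
    (hx : ∀ t : ℝ, x t =
      Matrix.fromBlocks 1 0 (w t) 1 * Matrix.fromBlocks (a t) 0 0 (d t) *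
        Matrix.fromBlocks 1 (v t) 0 1) :
    x 0 = 1 ∧ ∀ t : ℝ, HasDerivAt x (X t * x t) t := by
  have hcancel : ∀ t (z : Matrix (Fin p) (Fin q) ℂ), a t * ((a t)⁻¹ * z) = z := by
    intro t z
    rw [← Matrix.mul_assoc, Matrix.mul_nonsing_inv _ ((Matrix.isUnit_iff_isUnit_det _).mp (haunit t)), Matrix.one_mul]
  constructor
  · rw [hx 0, hw0, ha0, hd0, hv0]
    simp [Matrix.fromBlocks_multiply, Matrix.fromBlocks_one]
  · intro t
    have hxfun : x = fun s =>
        Matrix.fromBlocks 1 0 (w s) 1 * Matrix.fromBlocks (a s) 0 0 (d s) *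
          Matrix.fromBlocks 1 (v s) 0 1 := funext hx
    have hL : HasDerivAt (fun s => Matrix.fromBlocks (1 : Matrix (Fin p) (Fin p) ℂ) 0 (w s) 1)
        (Matrix.fromBlocks 0 0 (C t - w t * A t + D t * w t - w t * B t * w t) 0) t :=
      hasDerivAt_fromBlocks (hasDerivAt_const _ _) (hasDerivAt_const _ _) (hw t) (hasDerivAt_const _ _)
    have hM : HasDerivAt (fun s => Matrix.fromBlocks (a s) 0 0 (d s))
        (Matrix.fromBlocks ((A t + B t * w t) * a t) 0 0 ((D t - w t * B t) * d t)) t :=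
      hasDerivAt_fromBlocks (ha t) (hasDerivAt_const _ _) (hasDerivAt_const _ _) (hd t)
    have hU : HasDerivAt (fun s => Matrix.fromBlocks (1 : Matrix (Fin p) (Fin p) ℂ) (v s) 0 1)
        (Matrix.fromBlocks 0 ((a t)⁻¹ * B t * d t) 0 0) t :=
      hasDerivAt_fromBlocks (hasDerivAt_const _ _) (hv t) (hasDerivAt_const _ _) (hasDerivAt_const _ _)
    have key := (hL.mul hM).mul hU
    rw [hxfun]
    convert key using 1
    · rfl
    · rfl
    · rfl
    · rfl
    rw [hX t]
    beta_reduce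
    simp only [Matrix.fromBlocks_multiply, Matrix.fromBlocks_add, Matrix.mul_one, Matrix.one_mul,
      Matrix.mul_zero, Matrix.zero_mul, add_zero, zero_add, Matrix.mul_assoc, Pi.mul_apply]
    apply fromBlocks_inj'
    all_goals
      simp [Matrix.mul_add, Matrix.add_mul, Matrix.sub_mul, Matrix.mul_sub, Matrix.mul_assoc, hcancel]
      try abel
end
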